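/- The triple (Ш⁰(B), ⋄, R_B), together with the natural algebra injection j_B: B → Ш⁰(B), is the free nonunitary Rota-Baxter algebra of weight λ over B: for every nonunitary Rota-Baxter algebra (A, R) of weight λ and every nonunitary algebra homomorphism f: B → A, there exists a unique Rota-Baxter algebra homomorphism f̄: Ш⁰(B) → A with f̄ ∘ j_B = f. -/

import Mathlib

/-! Rota-Baxter words over an alphabet `X`, with two bracket symbols. The
alphabet is `X ⊕ Bool`, where `Sum.inr false` is the opening bracket `⌊` and
`Sum.inr true` is the closing bracket `⌋`. Words are lists; sets of words are
combined by concatenation. -/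

/-- The opening bracket `⌊`. -/
def lb {X : Type*} : X ⊕ Bool := Sum.inr false

/-- The closing bracket `⌋`. -/
def rb {X : Type*} : X ⊕ Bool := Sum.inr true

/-- The one-letter word given by `x ∈ X`. -/
def letter {X : Type*} (x : X) : List (X ⊕ Bool) := [Sum.inl x]

/-- The bracketed word `⌊w⌋`. -/
def bracket {X : Type*} (w : List (X ⊕ Bool)) : List (X ⊕ Bool) := lb :: (w ++ [rb])

/-- Concatenation of two sets of words. -/
def catS {X : Type*} (Y Z : Set (List (X ⊕ Bool))) : Set (List (X ⊕ Bool)) :=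
  {w | ∃ y ∈ Y, ∃ z ∈ Z, w = y ++ z}

/-- The set `⌊Z⌋`. -/
def brS {X : Type*} (Z : Set (List (X ⊕ Bool))) : Set (List (X ⊕ Bool)) := bracket '' Z

/-- `powS Y n` is the `(n+1)`-fold concatenation power `Y^{n+1}`. -/
def powS {X : Type*} (Y : Set (List (X ⊕ Bool))) : ℕ → Set (List (X ⊕ Bool))
  | 0 => Y
  | n + 1 => catS Y (powS Y n)

/-- The set of one-letter words, identified with `X`. -/
def lettersS (X : Type*) : Set (List (X ⊕ Bool)) := Set.range letter

/-- The alternating product `Λ(Y, Z)`: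
`(⋃_{r≥1} (Y⌊Z⌋)^r) ∪ (⋃_{r≥0} (Y⌊Z⌋)^r Y) ∪ (⋃_{r≥1} (⌊Z⌋Y)^r) ∪ (⋃_{r≥0} (⌊Z⌋Y)^r ⌊Z⌋)`. -/
def altS {X : Type*} (Y Z : Set (List (X ⊕ Bool))) : Set (List (X ⊕ Bool)) :=
  (⋃ n, powS (catS Y (brS Z)) n) ∪ (Y ∪ ⋃ n, catS (powS (catS Y (brS Z)) n) Y) ∪
  (⋃ n, powS (catS (brS Z) Y) n) ∪ (brS Z ∪ ⋃ n, catS (powS (catS (brS Z) Y) n) (brS Z))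

/-- `𝔛₀ = X`, `𝔛_{n+1} = Λ(X, 𝔛_n)`. -/
def frakX (X : Type*) : ℕ → Set (List (X ⊕ Bool))
  | 0 => lettersS X
  | n + 1 => altS (lettersS X) (frakX X n)

/-- `𝔛_∞ = ⋃_n 𝔛_n`, the set of Rota-Baxter words over `X`. -/
def frakXinf (X : Type*) : Set (List (X ⊕ Bool)) := ⋃ n, frakX X n

/-! The free `k`-module on words, basis elements, and the structural linear
maps (bracketing and one-sided concatenation), together with the head/tail
type of a Rota-Baxter word. -/

/-- The basis element of the free `k`-module on words given by the word `w`. -/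
noncomputable def sw {X : Type*} (k : Type*) [CommRing k] (w : List (X ⊕ Bool)) :
    List (X ⊕ Bool) →₀ k := Finsupp.single w 1

/-- The linear operator `R_B` sending (the basis element of) a word `w` to `⌊w⌋`. -/
noncomputable def brL {X : Type*} (k : Type*) [CommRing k] :
    (List (X ⊕ Bool) →₀ k) →ₗ[k] (List (X ⊕ Bool) →₀ k) :=
  Finsupp.lmapDomain k k bracket

/-- Left concatenation by a fixed word `p`, as a linear map. -/
noncomputable def lcat {X : Type*} (k : Type*) [CommRing k] (p : List (X ⊕ Bool)) :
    (List (X ⊕ Bool) →₀ k) →ₗ[k] (List (X ⊕ Bool) →₀ k) :=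
  Finsupp.lmapDomain k k (fun w => p ++ w)

/-- Right concatenation by a fixed word `p`, as a linear map. -/
noncomputable def rcat {X : Type*} (k : Type*) [CommRing k] (p : List (X ⊕ Bool)) :
    (List (X ⊕ Bool) →₀ k) →ₗ[k] (List (X ⊕ Bool) →₀ k) :=
  Finsupp.lmapDomain k k (fun w => w ++ p)

/-- A word has head type `1` iff it starts with the opening bracket `⌊`. -/
def startsBr {X : Type*} (w : List (X ⊕ Bool)) : Prop := w.head? = some lb

/-- A word has tail type `1` iff it ends with the closing bracket `⌋`. -/
def endsBr {X : Type*} (w : List (X ⊕ Bool)) : Prop := w.getLast? = some rb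

/-- The tail type of `u` differs from the head type of `v`: `t(u) ≠ h(v)`. -/
def typeMismatch {X : Type*} (u v : List (X ⊕ Bool)) : Prop :=
  ¬ (endsBr u ↔ startsBr v)

namespace RBFree

/-- Scan for the closing bracket matching at nesting depth `c`. -/
def splitAtMatch {X : Type*} : ℕ → List (X ⊕ Bool) → Option (List (X ⊕ Bool) × List (X ⊕ Bool))
  | _, [] => none
  | c, Sum.inl x :: t => (splitAtMatch c t).map fun p => (Sum.inl x :: p.1, p.2)
  | c, Sum.inr false :: t => (splitAtMatch (c+1) t).map fun p => (Sum.inr false :: p.1, p.2)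
  | 0, Sum.inr true :: t => some ([], t)
  | c+1, Sum.inr true :: t => (splitAtMatch c t).map fun p => (Sum.inr true :: p.1, p.2)

theorem splitAtMatch_eq {X : Type*} : ∀ (l : List (X ⊕ Bool)) (c : ℕ)
    (a b : List (X ⊕ Bool)), splitAtMatch c l = some (a, b) → l = a ++ Sum.inr true :: b := by
  intro l
  induction l with
  | nil => intro c a b h; simp [splitAtMatch] at h
  | cons hd t ih =>
    intro c a b h
    match hd with
    | Sum.inl x =>
      simp only [splitAtMatch, Option.map_eq_some_iff] at h
      obtain ⟨⟨a', b'⟩, hp, he⟩ := h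
      cases he
      simp [ih _ _ _ hp]
    | Sum.inr false =>
      simp only [splitAtMatch, Option.map_eq_some_iff] at h
      obtain ⟨⟨a', b'⟩, hp, he⟩ := h
      cases he
      simp [ih _ _ _ hp]
    | Sum.inr true =>
      match c with
      | 0 =>
        simp only [splitAtMatch, Option.some.injEq, Prod.mk.injEq] at h
        obtain ⟨rfl, rfl⟩ := h
        simp
      | c+1 =>
        simp only [splitAtMatch, Option.map_eq_some_iff] at h
        obtain ⟨⟨a', b'⟩, hp, he⟩ := h
        cases he
        simp [ih _ _ _ hp]

/-- `z` is balanced: scanning it never closes the ambient bracket and leaves the depth unchanged. -/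
def Bal {X : Type*} (z : List (X ⊕ Bool)) : Prop :=
  ∀ (c : ℕ) (rest : List (X ⊕ Bool)),
    splitAtMatch c (z ++ rest) = (splitAtMatch c rest).map fun p => (z ++ p.1, p.2)

theorem bal_letter {X : Type*} (x : X) : Bal [Sum.inl x] := by
  intro c rest
  simp only [List.cons_append, List.nil_append, splitAtMatch]

theorem bal_append {X : Type*} {z1 z2 : List (X ⊕ Bool)} (h1 : Bal z1) (h2 : Bal z2) :
    Bal (z1 ++ z2) := by
  intro c rest
  rw [List.append_assoc, h1, h2]
  cases splitAtMatch c rest <;> simp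

theorem bal_bracket {X : Type*} {z : List (X ⊕ Bool)} (h : Bal z) : Bal (bracket z) := by
  intro c rest
  have h1 : bracket z ++ rest = Sum.inr false :: (z ++ (Sum.inr true :: rest)) := by
    simp [bracket, lb, rb]
  rw [h1]
  simp only [splitAtMatch]
  rw [h]
  simp only [splitAtMatch]
  cases splitAtMatch c rest <;> simp [bracket, lb, rb]

/-- The canonical split of a balanced word inside brackets. -/
theorem splitAtMatch_bal {X : Type*} {z : List (X ⊕ Bool)} (h : Bal z)
    (rest : List (X ⊕ Bool)) :
    splitAtMatch 0 (z ++ (Sum.inr true :: rest)) = some (z, rest) := by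
  rw [h]
  simp [splitAtMatch]

end RBFree
namespace RBFree

theorem splitAtMatch_length {X : Type*} {l a b : List (X ⊕ Bool)} {c : ℕ}
    (h : splitAtMatch c l = some (a, b)) :
    a.length < l.length ∧ b.length < l.length := by
  have := splitAtMatch_eq l c a b h
  subst this
  simp
  omega

variable {k A : Type*} [CommRing k] [NonUnitalRing A] [Module k A]

/-- Evaluation of a word in the target Rota-Baxter algebra. -/
noncomputable def gfun {X : Type*} (φ : X → A) (R : A →ₗ[k] A) :
    List (X ⊕ Bool) → A
  | [] => 0
  | [Sum.inl x] => φ x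
  | Sum.inl x :: t :: ts => φ x * gfun φ R (t :: ts)
  | Sum.inr true :: _ => 0
  | Sum.inr false :: t =>
      match h : splitAtMatch 0 t with
      | none => 0
      | some (z, []) => R (gfun φ R z)
      | some (z, r :: rs) => R (gfun φ R z) * gfun φ R (r :: rs)
  termination_by l => l.length
  decreasing_by
  all_goals simp only [List.length_cons]
  · omega
  · have := splitAtMatch_length h; omega
  · have := splitAtMatch_length h; omega
  · have := splitAtMatch_length h; simp only [List.length_cons] at this ⊢; omega

theorem gfun_letter {X : Type*} (φ : X → A) (R : A →ₗ[k] A) (x : X) :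
    gfun φ R [Sum.inl x] = φ x := by
  simp [gfun]

theorem gfun_letter_cons {X : Type*} (φ : X → A) (R : A →ₗ[k] A) (x : X)
    {t : List (X ⊕ Bool)} (ht : t ≠ []) :
    gfun φ R (Sum.inl x :: t) = φ x * gfun φ R t := by
  match t with
  | [] => exact absurd rfl ht
  | y :: ys => rw [gfun]

theorem gfun_bracket {X : Type*} (φ : X → A) (R : A →ₗ[k] A)
    {z : List (X ⊕ Bool)} (hz : Bal z) :
    gfun φ R (bracket z) = R (gfun φ R z) := by
  have hb : bracket z = Sum.inr false :: (z ++ (Sum.inr true :: ([] : List (X ⊕ Bool)))) := by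
    simp [bracket, lb, rb]
  rw [hb, gfun]
  rw [splitAtMatch_bal hz]

theorem gfun_bracket_append {X : Type*} (φ : X → A) (R : A →ₗ[k] A)
    {z rest : List (X ⊕ Bool)} (hz : Bal z) (hr : rest ≠ []) :
    gfun φ R (bracket z ++ rest) = R (gfun φ R z) * gfun φ R rest := by
  match rest with
  | [] => exact absurd rfl hr
  | r :: rs =>
    have hb : bracket z ++ (r :: rs) = Sum.inr false :: (z ++ (Sum.inr true :: (r :: rs))) := by
      simp [bracket, lb, rb]
    rw [hb, gfun]
    rw [splitAtMatch_bal hz]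

end RBFree
namespace RBFree

variable {X : Type*}

theorem endsBr_bracket (z : List (X ⊕ Bool)) : endsBr (bracket z) := by
  show (lb :: (z ++ [rb]) : List (X ⊕ Bool)).getLast? = some rb
  rw [show (lb :: (z ++ [rb]) : List (X ⊕ Bool)) = (lb :: z) ++ [rb] from rfl,
    List.getLast?_append_of_ne_nil _ (by simp)]
  rfl

theorem startsBr_bracket (z : List (X ⊕ Bool)) : startsBr (bracket z) := rfl

theorem not_endsBr_letter (x : X) : ¬ endsBr [Sum.inl x] := by
  simp [endsBr, rb]

theorem not_startsBr_letter (x : X) : ¬ startsBr ([Sum.inl x] : List (X ⊕ Bool)) := by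
  simp [startsBr, lb]

theorem mismatch_BL {u v : List (X ⊕ Bool)} (h1 : endsBr u) (h2 : ¬ startsBr v) :
    typeMismatch u v := fun hi => h2 (hi.mp h1)

theorem mismatch_LB {u v : List (X ⊕ Bool)} (h1 : ¬ endsBr u) (h2 : startsBr v) :
    typeMismatch u v := fun hi => h1 (hi.mpr h2)

theorem mem_lettersS {u : List (X ⊕ Bool)} (h : u ∈ lettersS X) : ∃ x, u = [Sum.inl x] := h.imp
  fun x hx => hx.symm

theorem catS_W1_ht {Z : Set (List (X ⊕ Bool))} {w : List (X ⊕ Bool)}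
    (hw : w ∈ catS (lettersS X) (brS Z)) :
    (∃ x, w.head? = some (Sum.inl x)) ∧ w.getLast? = some (Sum.inr true) := by
  obtain ⟨y, hy, z, ⟨z', _, rfl⟩, rfl⟩ := hw
  obtain ⟨x, rfl⟩ := mem_lettersS hy
  refine ⟨⟨x, rfl⟩, ?_⟩
  rw [List.getLast?_append_of_ne_nil _ (by simp [bracket])]
  exact endsBr_bracket z'

theorem catS_W2_ht {Z : Set (List (X ⊕ Bool))} {w : List (X ⊕ Bool)}
    (hw : w ∈ catS (brS Z) (lettersS X)) :
    w.head? = some (Sum.inr false) ∧ ∃ x, w.getLast? = some (Sum.inl x) := by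
  obtain ⟨y, ⟨z', _, rfl⟩, z, hz, rfl⟩ := hw
  obtain ⟨x, rfl⟩ := mem_lettersS hz
  constructor
  · rw [List.head?_append_of_ne_nil _ (by simp [bracket])]; rfl
  · exact ⟨x, by rw [List.getLast?_append_of_ne_nil _ (by simp)]; rfl⟩

/-- head and tail of elements of `(Y⌊Z⌋)^{n+1}`. -/
theorem powS_W1_ht {Z : Set (List (X ⊕ Bool))} :
    ∀ n, ∀ w ∈ powS (catS (lettersS X) (brS Z)) n,
      (∃ x, w.head? = some (Sum.inl x)) ∧ w.getLast? = some (Sum.inr true) := by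
  intro n
  induction n with
  | zero => exact fun w hw => catS_W1_ht hw
  | succ n ih =>
    rintro w ⟨w1, h1, w2, h2, rfl⟩
    obtain ⟨⟨x, hx⟩, hlast⟩ := catS_W1_ht h1
    obtain ⟨⟨x2, hx2⟩, hlast2⟩ := ih w2 h2
    have hw1ne : w1 ≠ [] := by intro h; rw [h] at hx; simp at hx
    have hw2ne : w2 ≠ [] := by intro h; rw [h] at hx2; simp at hx2
    constructor
    · exact ⟨x, by rw [List.head?_append_of_ne_nil _ hw1ne, hx]⟩
    · rw [List.getLast?_append_of_ne_nil _ hw2ne, hlast2]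

/-- head and tail of elements of `(⌊Z⌋Y)^{n+1}`. -/
theorem powS_W2_ht {Z : Set (List (X ⊕ Bool))} :
    ∀ n, ∀ w ∈ powS (catS (brS Z) (lettersS X)) n,
      w.head? = some (Sum.inr false) ∧ ∃ x, w.getLast? = some (Sum.inl x) := by
  intro n
  induction n with
  | zero => exact fun w hw => catS_W2_ht hw
  | succ n ih =>
    rintro w ⟨w1, h1, w2, h2, rfl⟩
    obtain ⟨hx1, x1, hlast1⟩ := catS_W2_ht h1
    obtain ⟨hx, x2, hx2⟩ := ih w2 h2
    have hw1ne : w1 ≠ [] := by intro h; rw [h] at hx1; simp at hx1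
    have hw2ne : w2 ≠ [] := by intro h; rw [h] at hx; simp at hx
    constructor
    · rw [List.head?_append_of_ne_nil _ hw1ne, hx1]
    · exact ⟨x2, by rw [List.getLast?_append_of_ne_nil _ hw2ne, hx2]⟩

end RBFree
namespace RBFree

variable {X : Type*}

theorem frakX_subset_inf (n : ℕ) : frakX X n ⊆ frakXinf X := Set.subset_iUnion (frakX X) n

theorem letter_mem_inf (x : X) : ([Sum.inl x] : List (X ⊕ Bool)) ∈ frakXinf X :=
  frakX_subset_inf 0 ⟨x, rfl⟩

theorem bracket_mem_inf {z : List (X ⊕ Bool)} (hz : z ∈ frakXinf X) :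
    bracket z ∈ frakXinf X := by
  obtain ⟨n, hn⟩ : ∃ n, z ∈ frakX X n := Set.mem_iUnion.1 hz
  exact frakX_subset_inf (n+1) (Or.inr (Or.inl ⟨z, hn, rfl⟩))

theorem ne_nil_of_head? {w : List (X ⊕ Bool)} {c : X ⊕ Bool} (h : w.head? = some c) :
    w ≠ [] := by intro hn; rw [hn] at h; simp at h

theorem ne_nil_of_getLast? {w : List (X ⊕ Bool)} {c : X ⊕ Bool} (h : w.getLast? = some c) :
    w ≠ [] := by intro hn; rw [hn] at h; simp at h

theorem bracket_ne_nil (z : List (X ⊕ Bool)) : bracket z ≠ [] := by simp [bracket]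

theorem decomp {u : List (X ⊕ Bool)} (hu : u ∈ frakXinf X) :
    (∃ x, u = [Sum.inl x]) ∨ (∃ z ∈ frakXinf X, u = bracket z) ∨
    ∃ p q, p ∈ frakXinf X ∧ q ∈ frakXinf X ∧ typeMismatch p q ∧ p ≠ [] ∧ q ≠ [] ∧
      u = p ++ q := by
  obtain ⟨n, hn⟩ : ∃ n, u ∈ frakX X n := Set.mem_iUnion.1 hu
  match n with
  | 0 =>
    obtain ⟨x, rfl⟩ := mem_lettersS hn
    exact Or.inl ⟨x, rfl⟩
  | n+1 =>
    have m1 : ∀ a, ∀ w ∈ powS (catS (lettersS X) (brS (frakX X n))) a, w ∈ frakXinf X := by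
      intro a w hw
      exact frakX_subset_inf (n+1) (Or.inl (Or.inl (Or.inl (Set.mem_iUnion.2 ⟨a, hw⟩))))
    have m3 : ∀ a, ∀ w ∈ powS (catS (brS (frakX X n)) (lettersS X)) a, w ∈ frakXinf X := by
      intro a w hw
      exact frakX_subset_inf (n+1) (Or.inl (Or.inr (Set.mem_iUnion.2 ⟨a, hw⟩)))
    have mbr : ∀ z ∈ frakX X n, bracket z ∈ frakXinf X := fun z hz =>
      frakX_subset_inf (n+1) (Or.inr (Or.inl ⟨z, hz, rfl⟩))
    rcases hn with ((h | (h | h)) | h) | (h | h)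
    · -- ⋃ a, powS (Y⌊Z⌋) a
      obtain ⟨a, ha⟩ := Set.mem_iUnion.1 h
      match a with
      | 0 =>
        obtain ⟨y, hy, q, ⟨z, hz, rfl⟩, rfl⟩ := ha
        obtain ⟨x, rfl⟩ := mem_lettersS hy
        refine Or.inr (Or.inr ⟨[Sum.inl x], bracket z, letter_mem_inf x, mbr z hz, ?_,
          by simp, bracket_ne_nil z, rfl⟩)
        exact mismatch_LB (not_endsBr_letter x) (startsBr_bracket z)
      | a+1 =>
        obtain ⟨w1, h1, w2, h2, rfl⟩ := ha
        obtain ⟨⟨x1, hx1⟩, hl1⟩ := catS_W1_ht h1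
        obtain ⟨⟨x2, hx2⟩, hl2⟩ := powS_W1_ht a w2 h2
        refine Or.inr (Or.inr ⟨w1, w2, m1 0 w1 h1, m1 a w2 h2, ?_,
          ne_nil_of_head? hx1, ne_nil_of_head? hx2, rfl⟩)
        refine mismatch_BL hl1 ?_
        intro hsb
        rw [startsBr, hx2] at hsb
        simp [lb] at hsb
    · -- Y
      obtain ⟨x, rfl⟩ := mem_lettersS h
      exact Or.inl ⟨x, rfl⟩
    · -- ⋃ a, (Y⌊Z⌋)^a Y
      obtain ⟨a, w1, h1, y, hy, rfl⟩ := Set.mem_iUnion.1 h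
      obtain ⟨x, rfl⟩ := mem_lettersS hy
      obtain ⟨⟨x1, hx1⟩, hl1⟩ := powS_W1_ht a w1 h1
      exact Or.inr (Or.inr ⟨w1, [Sum.inl x], m1 a w1 h1, letter_mem_inf x,
        mismatch_BL hl1 (not_startsBr_letter x), ne_nil_of_head? hx1, by simp, rfl⟩)
    · -- ⋃ a, powS (⌊Z⌋Y) a
      obtain ⟨a, ha⟩ := Set.mem_iUnion.1 h
      match a with
      | 0 =>
        obtain ⟨y, ⟨z, hz, rfl⟩, q, hq, rfl⟩ := ha
        obtain ⟨x, rfl⟩ := mem_lettersS hq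
        exact Or.inr (Or.inr ⟨bracket z, [Sum.inl x], mbr z hz, letter_mem_inf x,
          mismatch_BL (endsBr_bracket z) (not_startsBr_letter x), bracket_ne_nil z,
          by simp, rfl⟩)
      | a+1 =>
        obtain ⟨w1, h1, w2, h2, rfl⟩ := ha
        obtain ⟨hx1, x1, hl1⟩ := catS_W2_ht h1
        obtain ⟨hx2, x2, hl2⟩ := powS_W2_ht a w2 h2
        refine Or.inr (Or.inr ⟨w1, w2, m3 0 w1 h1, m3 a w2 h2, ?_,
          ne_nil_of_head? hx1, ne_nil_of_head? hx2, rfl⟩)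
        refine mismatch_LB ?_ hx2
        intro heb
        rw [endsBr, hl1] at heb
        simp [rb] at heb
    · -- brS Z
      obtain ⟨z, hz, rfl⟩ := h
      exact Or.inr (Or.inl ⟨z, frakX_subset_inf n hz, rfl⟩)
    · -- ⋃ a, (⌊Z⌋Y)^a ⌊Z⌋
      obtain ⟨a, w1, h1, q, ⟨z, hz, rfl⟩, rfl⟩ := Set.mem_iUnion.1 h
      obtain ⟨hx1, x1, hl1⟩ := powS_W2_ht a w1 h1
      refine Or.inr (Or.inr ⟨w1, bracket z, m3 a w1 h1, mbr z hz, ?_,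
        ne_nil_of_head? hx1, bracket_ne_nil z, rfl⟩)
      refine mismatch_LB ?_ (startsBr_bracket z)
      intro heb
      rw [endsBr, hl1] at heb
      simp [rb] at heb

theorem ne_nil_of_mem_inf {u : List (X ⊕ Bool)} (hu : u ∈ frakXinf X) : u ≠ [] := by
  rcases decomp hu with ⟨x, rfl⟩ | ⟨z, _, rfl⟩ | ⟨p, q, _, _, _, hp, hq, rfl⟩
  · simp
  · exact bracket_ne_nil z
  · simp [hp]

theorem bal_nil : Bal ([] : List (X ⊕ Bool)) := by
  intro c rest
  simp only [List.nil_append]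
  cases h : splitAtMatch c rest <;> simp [h]

theorem bal_of_mem_aux : ∀ (N : ℕ) {u : List (X ⊕ Bool)}, u.length ≤ N →
    u ∈ frakXinf X → Bal u := by
  intro N
  induction N with
  | zero =>
    intro u hl hu
    rw [List.length_eq_zero_iff.mp (Nat.le_zero.mp hl)]
    exact bal_nil
  | succ N ih =>
    intro u hl hu
    rcases decomp hu with ⟨x, rfl⟩ | ⟨z, hz, rfl⟩ | ⟨p, q, hp, hq, _, hpne, hqne, rfl⟩
    · exact bal_letter x
    · refine bal_bracket (ih ?_ hz)
      simp [bracket] at hl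
      omega
    · have hlp : p.length ≤ N := by
        have := List.length_pos_iff.mpr hqne
        simp at hl
        omega
      have hlq : q.length ≤ N := by
        have := List.length_pos_iff.mpr hpne
        simp at hl
        omega
      exact bal_append (ih hlp hp) (ih hlq hq)

theorem bal_of_mem {u : List (X ⊕ Bool)} (hu : u ∈ frakXinf X) : Bal u :=
  bal_of_mem_aux u.length le_rfl hu

end RBFree
namespace RBFree

variable {k A : Type*} [CommRing k] [NonUnitalRing A] [Module k A]

theorem gfun_append_inf_aux {X : Type*} (φ : X → A) (R : A →ₗ[k] A) :
    ∀ (N : ℕ) {u : List (X ⊕ Bool)}, u.length ≤ N → u ∈ frakXinf X →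
      ∀ {rest : List (X ⊕ Bool)}, rest ≠ [] →
        gfun φ R (u ++ rest) = gfun φ R u * gfun φ R rest := by
  intro N
  induction N with
  | zero =>
    intro u hl hu
    exact absurd (List.length_eq_zero_iff.mp (Nat.le_zero.mp hl)) (ne_nil_of_mem_inf hu)
  | succ N ih =>
    intro u hl hu rest hrest
    rcases decomp hu with ⟨x, rfl⟩ | ⟨z, hz, rfl⟩ | ⟨p, q, hp, hq, _, hpne, hqne, rfl⟩
    · rw [gfun_letter, List.cons_append, List.nil_append, gfun_letter_cons φ R x hrest]
    · have hbz : Bal z := bal_of_mem hz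
      rw [gfun_bracket φ R hbz, gfun_bracket_append φ R hbz hrest]
    · have hlp : p.length ≤ N := by
        have := List.length_pos_iff.mpr hqne; simp at hl; omega
      have hlq : q.length ≤ N := by
        have := List.length_pos_iff.mpr hpne; simp at hl; omega
      rw [List.append_assoc, ih hlp hp (by simp [hqne]), ih hlq hq hrest,
        ih hlp hp hqne, mul_assoc]

theorem gfun_append_inf {X : Type*} (φ : X → A) (R : A →ₗ[k] A)
    {u : List (X ⊕ Bool)} (hu : u ∈ frakXinf X)
    {rest : List (X ⊕ Bool)} (hrest : rest ≠ []) :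
    gfun φ R (u ++ rest) = gfun φ R u * gfun φ R rest :=
  gfun_append_inf_aux φ R u.length le_rfl hu hrest

end RBFree

open RBFree

/-- `(Ш⁰(B), ⋄, R_B)`, together with the natural injection `j_B : B → Ш⁰(B)`
(sending the basis element `x ∈ X` of `B` to the one-letter word `x`), is the
free nonunitary Rota-Baxter algebra of weight `λ` over `B`: for every
nonunitary Rota-Baxter algebra `(A, R)` of weight `λ` and every nonunitary
algebra homomorphism `f : B → A`, there is a unique Rota-Baxter algebra
homomorphism `f̄ : Ш⁰(B) → A` with `f̄ ∘ j_B = f`. Here `Ш⁰(B)` is the span `S`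
of the Rota-Baxter words, with the product `⋄` (`mul`) and operator `R_B = brL`
satisfying the recursive defining clauses. -/
theorem stmt_13 {k X B A : Type*} [CommRing k]
    [NonUnitalRing B] [Module k B] [SMulCommClass k B B] [IsScalarTower k B B]
    [NonUnitalRing A] [Module k A] [SMulCommClass k A A] [IsScalarTower k A A]
    (bX : Module.Basis X k B) (lam : k)
    (mul : (List (X ⊕ Bool) →₀ k) →ₗ[k] (List (X ⊕ Bool) →₀ k) →ₗ[k]
      (List (X ⊕ Bool) →₀ k))
    (hconcat : ∀ u ∈ frakXinf X, ∀ v ∈ frakXinf X, typeMismatch u v →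
      mul (sw k u) (sw k v) = sw k (u ++ v))
    (hXX : ∀ x x' : X,
      mul (sw k (letter x)) (sw k (letter x')) =
        (bX.constr k fun x₀ : X => sw k (letter x₀)) (bX x * bX x'))
    (hbr : ∀ u ∈ frakXinf X, ∀ v ∈ frakXinf X,
      mul (sw k (bracket u)) (sw k (bracket v)) =
        brL k (mul (sw k (bracket u)) (sw k v)) +
          brL k (mul (sw k u) (sw k (bracket v))) +
          lam • brL k (mul (sw k u) (sw k v)))
    (hsplitL : ∀ u ∈ frakXinf X, ∀ v ∈ frakXinf X, typeMismatch u v →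
      ∀ w ∈ frakXinf X, mul (sw k (u ++ v)) (sw k w) = lcat k u (mul (sw k v) (sw k w)))
    (hsplitR : ∀ u ∈ frakXinf X, ∀ v ∈ frakXinf X, typeMismatch u v →
      ∀ w ∈ frakXinf X, mul (sw k w) (sw k (u ++ v)) = rcat k v (mul (sw k w) (sw k u)))
    -- closure of the span `S = Ш⁰(B)` under the product, the operator and `j_B`
    (S : Submodule k (List (X ⊕ Bool) →₀ k))
    (hS : S = Submodule.span k (sw k '' frakXinf X))
    (hmulS : ∀ a ∈ S, ∀ b ∈ S, mul a b ∈ S)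
    (hbrS : ∀ a ∈ S, brL k a ∈ S)
    (hjS : ∀ x : B, (bX.constr k fun x₀ : X => sw k (letter x₀)) x ∈ S)
    -- `(A, R)` is a nonunitary Rota-Baxter algebra of weight `λ`
    (R : A →ₗ[k] A)
    (hR : ∀ a b : A, R a * R b = R (R a * b + a * R b + lam • (a * b)))
    -- `f : B → A` is a nonunitary algebra homomorphism
    (f : B →ₗ[k] A) (hf : ∀ x y : B, f (x * y) = f x * f y) :
    ∃! fbar : S →ₗ[k] A,
      (∀ a b : S, fbar ⟨mul a b, hmulS a a.2 b b.2⟩ = fbar a * fbar b) ∧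
      (∀ a : S, fbar ⟨brL k a, hbrS a a.2⟩ = R (fbar a)) ∧
      (∀ x : B, fbar ⟨(bX.constr k fun x₀ : X => sw k (letter x₀)) x, hjS x⟩ = f x) := by
  classical
  subst hS
  let φ : X → A := fun x => f (bX x)
  let T : (List (X ⊕ Bool) →₀ k) →ₗ[k] A := Finsupp.linearCombination k (gfun φ R)
  have hTsw : ∀ w : List (X ⊕ Bool), T (sw k w) = gfun φ R w := by
    intro w
    show Finsupp.linearCombination k (gfun φ R) (Finsupp.single w 1) = gfun φ R w
    rw [Finsupp.linearCombination_single, one_smul]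
  have swmem : ∀ {u : List (X ⊕ Bool)}, u ∈ frakXinf X →
      sw k u ∈ Submodule.span k (sw k '' frakXinf X) :=
    fun hu => Submodule.subset_span ⟨_, hu, rfl⟩
  have hgletter : ∀ x : X, gfun φ R (letter x) = f (bX x) := fun x => gfun_letter φ R x
  have hTj : ∀ b : B, T ((bX.constr k fun x₀ : X => sw k (letter x₀)) b) = f b := by
    intro b
    have hcomp : T ∘ₗ (bX.constr k fun x₀ : X => sw k (letter x₀)) = f := by
      refine Module.Basis.ext bX fun x => ?_
      rw [LinearMap.comp_apply, Module.Basis.constr_basis]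
      exact (hTsw _).trans (hgletter x)
    exact DFunLike.congr_fun hcomp b
  have hTbr : ∀ e ∈ Submodule.span k (sw k '' frakXinf X), T (brL k e) = R (T e) := by
    intro e he
    induction he using Submodule.span_induction with
    | mem e he =>
      obtain ⟨u, hu, rfl⟩ := he
      have h1 : brL k (sw k u) = sw k (bracket u) := by
        show Finsupp.mapDomain bracket (Finsupp.single u 1) = Finsupp.single (bracket u) 1
        rw [Finsupp.mapDomain_single]
      rw [h1, hTsw, hTsw]
      exact gfun_bracket φ R (bal_of_mem hu)
    | zero => simp
    | add x y hx hy ihx ihy => simp only [map_add, ihx, ihy]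
    | smul c x hx ihx => simp only [map_smul, ihx]
  have hTlcat : ∀ p, p ∈ frakXinf X → ∀ e ∈ Submodule.span k (sw k '' frakXinf X),
      T (lcat k p e) = gfun φ R p * T e := by
    intro p hp e he
    induction he using Submodule.span_induction with
    | mem e he =>
      obtain ⟨w, hw, rfl⟩ := he
      have h1 : lcat k p (sw k w) = sw k (p ++ w) := by
        show Finsupp.mapDomain _ (Finsupp.single w 1) = Finsupp.single (p ++ w) 1
        rw [Finsupp.mapDomain_single]
      rw [h1, hTsw, hTsw]
      exact gfun_append_inf φ R hp (ne_nil_of_mem_inf hw)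
    | zero => simp
    | add x y hx hy ihx ihy => simp only [map_add, ihx, ihy, mul_add]
    | smul c x hx ihx => simp only [map_smul, ihx, mul_smul_comm]
  have hTrcat : ∀ q, q ∈ frakXinf X → ∀ e ∈ Submodule.span k (sw k '' frakXinf X),
      T (rcat k q e) = T e * gfun φ R q := by
    intro q hq e he
    induction he using Submodule.span_induction with
    | mem e he =>
      obtain ⟨w, hw, rfl⟩ := he
      have h1 : rcat k q (sw k w) = sw k (w ++ q) := by
        show Finsupp.mapDomain _ (Finsupp.single w 1) = Finsupp.single (w ++ q) 1
        rw [Finsupp.mapDomain_single]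
      rw [h1, hTsw, hTsw]
      exact gfun_append_inf φ R hw (ne_nil_of_mem_inf hq)
    | zero => simp
    | add x y hx hy ihx ihy => simp only [map_add, ihx, ihy, add_mul]
    | smul c x hx ihx => simp only [map_smul, ihx, smul_mul_assoc]
  -- the concatenation case of the key computation
  have hcc : ∀ u, u ∈ frakXinf X → ∀ v, v ∈ frakXinf X → typeMismatch u v →
      T (mul (sw k u) (sw k v)) = gfun φ R u * gfun φ R v := by
    intro u hu v hv hm
    rw [hconcat u hu v hv hm, hTsw]
    exact gfun_append_inf φ R hu (ne_nil_of_mem_inf hv)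
  -- the key computation: `T` is multiplicative on basis words
  have key : ∀ N : ℕ, ∀ u, u ∈ frakXinf X → ∀ v, v ∈ frakXinf X →
      u.length + v.length ≤ N →
      T (mul (sw k u) (sw k v)) = gfun φ R u * gfun φ R v := by
    intro N
    induction N with
    | zero =>
      intro u hu v hv hl
      have := List.length_pos_iff.mpr (ne_nil_of_mem_inf hu)
      omega
    | succ N ih =>
      intro u hu v hv hl
      rcases decomp hu with ⟨x, rfl⟩ | ⟨z, hz, rfl⟩ |
        ⟨p, q, hp, hq, hmis, hpne, hqne, rfl⟩
      · -- u = [x]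
        rcases decomp hv with ⟨x', rfl⟩ | ⟨z', hz', rfl⟩ |
          ⟨p', q', hp', hq', hmis', hpne', hqne', rfl⟩
        · show T (mul (sw k (letter x)) (sw k (letter x'))) =
            gfun φ R (letter x) * gfun φ R (letter x')
          rw [hXX x x', hTj, hf, hgletter, hgletter]
        · exact hcc _ hu _ hv (mismatch_LB (not_endsBr_letter x) (startsBr_bracket z'))
        · have hlp : ([Sum.inl x] : List (X ⊕ Bool)).length + p'.length ≤ N := by
            have := List.length_pos_iff.mpr hqne'
            rw [List.length_append] at hl
            omega
          rw [hsplitR p' hp' q' hq' hmis' _ hu,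
            hTrcat q' hq' _ (hmulS _ (swmem hu) _ (swmem hp')),
            ih _ hu p' hp' hlp, gfun_append_inf φ R hp' hqne', mul_assoc]
      · -- u = bracket z
        rcases decomp hv with ⟨x', rfl⟩ | ⟨z', hz', rfl⟩ |
          ⟨p', q', hp', hq', hmis', hpne', hqne', rfl⟩
        · exact hcc _ hu _ hv (mismatch_BL (endsBr_bracket z) (not_startsBr_letter x'))
        · have hlbz : (bracket z).length = z.length + 2 := by simp [bracket]
          have hlbz' : (bracket z').length = z'.length + 2 := by simp [bracket]
          have hl1 : (bracket z).length + z'.length ≤ N := by omega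
          have hl2 : z.length + (bracket z').length ≤ N := by omega
          have hl3 : z.length + z'.length ≤ N := by omega
          have hbzmem := bracket_mem_inf hz
          have hbz'mem := bracket_mem_inf hz'
          rw [hbr z hz z' hz', map_add, map_add,
            hTbr _ (hmulS _ (swmem hbzmem) _ (swmem hz')),
            hTbr _ (hmulS _ (swmem hz) _ (swmem hbz'mem)),
            map_smul, hTbr _ (hmulS _ (swmem hz) _ (swmem hz')),
            ih _ hbzmem _ hz' hl1, ih _ hz _ hbz'mem hl2, ih _ hz _ hz' hl3,
            gfun_bracket φ R (bal_of_mem hz), gfun_bracket φ R (bal_of_mem hz'),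
            hR (gfun φ R z) (gfun φ R z'), map_add, map_add, map_smul]
        · have hlp : (bracket z).length + p'.length ≤ N := by
            have := List.length_pos_iff.mpr hqne'
            rw [List.length_append] at hl
            omega
          rw [hsplitR p' hp' q' hq' hmis' _ hu,
            hTrcat q' hq' _ (hmulS _ (swmem hu) _ (swmem hp')),
            ih _ hu p' hp' hlp, gfun_append_inf φ R hp' hqne', mul_assoc]
      · -- u = p ++ q
        have hlq : q.length + v.length ≤ N := by
          have := List.length_pos_iff.mpr hpne
          rw [List.length_append] at hl
          omega
        rw [hsplitL p hp q hq hmis v hv,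
          hTlcat p hp _ (hmulS _ (swmem hq) _ (swmem hv)),
          ih q hq v hv hlq, gfun_append_inf φ R hp hqne, mul_assoc]
  -- multiplicativity on the whole span
  have hmulT : ∀ a ∈ Submodule.span k (sw k '' frakXinf X),
      ∀ b ∈ Submodule.span k (sw k '' frakXinf X), T (mul a b) = T a * T b := by
    intro a ha b hb
    refine Submodule.span_induction₂ (p := fun a b _ _ => T (mul a b) = T a * T b)
      ?_ ?_ ?_ ?_ ?_ ?_ ?_ ha hb
    · rintro _ _ ⟨u, hu, rfl⟩ ⟨v, hv, rfl⟩
      rw [hTsw, hTsw]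
      exact key (u.length + v.length) u hu v hv le_rfl
    · intro y _
      simp
    · intro x _
      simp
    · intro x y z _ _ _ ih1 ih2
      rw [map_add, LinearMap.add_apply, map_add, ih1, ih2, map_add, add_mul]
    · intro x y z _ _ _ ih1 ih2
      rw [map_add, map_add, ih1, ih2, map_add, mul_add]
    · intro c x y _ _ ih1
      rw [map_smul, LinearMap.smul_apply, map_smul, ih1, map_smul, smul_mul_assoc]
    · intro c x y _ _ ih1
      rw [map_smul, map_smul, ih1, map_smul, mul_smul_comm]
  refine ⟨T ∘ₗ (Submodule.span k (sw k '' frakXinf X)).subtype, ⟨?_, ?_, ?_⟩, ?_⟩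
  · intro a b
    exact hmulT _ a.2 _ b.2
  · intro a
    exact hTbr _ a.2
  · intro b
    exact hTj b
  · rintro fbar' ⟨h1, h2, h3⟩
    have huniq : ∀ N : ℕ, ∀ u, ∀ hu : u ∈ frakXinf X, u.length ≤ N →
        fbar' ⟨sw k u, swmem hu⟩ = gfun φ R u := by
      intro N
      induction N with
      | zero =>
        intro u hu hl
        exact absurd (List.length_eq_zero_iff.mp (Nat.le_zero.mp hl)) (ne_nil_of_mem_inf hu)
      | succ N ih =>
        intro u hu hl
        rcases decomp hu with ⟨x, rfl⟩ | ⟨z, hz, rfl⟩ |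
          ⟨p, q, hp, hq, hmis, hpne, hqne, rfl⟩
        · have he : sw k ([Sum.inl x] : List (X ⊕ Bool)) =
              (bX.constr k fun x₀ : X => sw k (letter x₀)) (bX x) :=
            (Module.Basis.constr_basis bX k (fun x₀ : X => sw k (letter x₀)) x).symm
          have heq : (⟨sw k ([Sum.inl x] : List (X ⊕ Bool)), swmem hu⟩ :
              Submodule.span k (sw k '' frakXinf X)) =
              ⟨(bX.constr k fun x₀ : X => sw k (letter x₀)) (bX x), hjS (bX x)⟩ :=
            Subtype.ext he
          rw [heq, h3]
          exact (hgletter x).symm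
        · have he : sw k (bracket z) = brL k (sw k z) := by
            show Finsupp.single (bracket z) 1 = Finsupp.mapDomain bracket (Finsupp.single z 1)
            rw [Finsupp.mapDomain_single]
          have heq : (⟨sw k (bracket z), swmem hu⟩ :
              Submodule.span k (sw k '' frakXinf X)) =
              ⟨brL k (sw k z), hbrS _ (swmem hz)⟩ := Subtype.ext he
          have hlz : z.length ≤ N := by
            have : (bracket z).length = z.length + 2 := by simp [bracket]
            omega
          rw [heq, h2 ⟨sw k z, swmem hz⟩, ih z hz hlz]
          exact (gfun_bracket φ R (bal_of_mem hz)).symm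
        · have he : sw k (p ++ q) = mul (sw k p) (sw k q) := (hconcat p hp q hq hmis).symm
          have heq : (⟨sw k (p ++ q), swmem hu⟩ :
              Submodule.span k (sw k '' frakXinf X)) =
              ⟨mul (sw k p) (sw k q), hmulS _ (swmem hp) _ (swmem hq)⟩ := Subtype.ext he
          have hlp : p.length ≤ N := by
            have := List.length_pos_iff.mpr hqne
            rw [List.length_append] at hl
            omega
          have hlq : q.length ≤ N := by
            have := List.length_pos_iff.mpr hpne
            rw [List.length_append] at hl
            omega
          rw [heq, h1 ⟨sw k p, swmem hp⟩ ⟨sw k q, swmem hq⟩, ih p hp hlp, ih q hq hlq]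
          exact (gfun_append_inf φ R hp hqne).symm
    apply LinearMap.ext
    rintro ⟨v, hv⟩
    show fbar' ⟨v, hv⟩ = T v
    induction hv using Submodule.span_induction with
    | mem w hw =>
      obtain ⟨u, hu, rfl⟩ := hw
      rw [hTsw]
      exact huniq u.length u hu le_rfl
    | zero =>
      exact (map_zero fbar').trans (map_zero T).symm
    | add x y hx hy ihx ihy =>
      have : (⟨x + y, Submodule.add_mem _ hx hy⟩ :
          Submodule.span k (sw k '' frakXinf X)) = ⟨x, hx⟩ + ⟨y, hy⟩ := rfl
      rw [this, map_add, ihx, ihy, map_add]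
    | smul c x hx ihx =>
      have : (⟨c • x, Submodule.smul_mem _ c hx⟩ :
          Submodule.span k (sw k '' frakXinf X)) = c • ⟨x, hx⟩ := rfl
      rw [this, map_smul, ihx, map_smul]
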